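/- If a stable conjunction ⋀({¬⟨τ⟩⊤} ∪ Ψ) of HML_srbb distinguishes a process p from a nonempty set Q (with respect to ⟦·⟧^ε) and every process in Q is stable, then expr^ε(⋀({¬⟨τ⟩⊤} ∪ Ψ)) ∈ Win_a((p,Q)^s_d) in the weak spectroscopy energy game G△. -/

import Mathlib

open Classical

noncomputable section

namespace Spectroscopy

/-! ### Energies and declining energy games -/

/-- Energies: 8-dimensional vectors over `ℕ ∪ {∞}`, ordered componentwise. -/
abbrev Energy : Type := Fin 8 → ℕ∞

/-- The `i`-th unit vector. -/
def unitE (i : Fin 8) : Energy := fun k => if k = i then 1 else 0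

/-- The vector with value `v` at position `i` and `0` elsewhere. -/
def onlyAt (i : Fin 8) (v : ℕ∞) : Energy := fun k => if k = i then v else 0

/-- Components of energy updates: `-1`, `0`, or minimum selection `min_D`.
For the component at position `k`, `minWith D` selects the minimum over the
positions `{k} ∪ D`, so the requirement `k ∈ D` of the paper holds by
construction. -/
inductive UpdComp : Type
  | decr : UpdComp
  | zero : UpdComp
  | minWith (D : Finset (Fin 8)) : UpdComp
deriving DecidableEq

/-- Energy updates. -/
abbrev Update : Type := Fin 8 → UpdComp

/-- Partial application of an update to an energy (`none` when a component
would become negative). -/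
def upd (e : Energy) (u : Update) : Option Energy :=
  if ∀ k, u k = UpdComp.decr → e k ≠ 0 then
    some (fun k =>
      match u k with
      | UpdComp.decr => e k - 1
      | UpdComp.zero => e k
      | UpdComp.minWith D => (insert k D).inf e)
  else none

/-- A declining energy game: positions, a defender predicate (attacker
positions are the non-defender ones), and moves labeled with updates. -/
structure EGame (Pos : Type) where
  defender : Pos → Prop
  move : Pos → Update → Pos → Prop

/-- Attacker winning budgets `Win_a`: at an attacker position some move must
lead to an attacker-won position under the updated energy; at a defender
position every move must (be defined and) lead to an attacker-won position. -/
inductive EGame.Win {Pos : Type} (G : EGame Pos) : Pos → Energy → Prop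
  | attack {g : Pos} {u : Update} {g' : Pos} {e e' : Energy} :
      ¬ G.defender g → G.move g u g' → upd e u = some e' → G.Win g' e' →
      G.Win g e
  | defend {g : Pos} {e : Energy} :
      G.defender g →
      (∀ u g', G.move g u g' → upd e u ≠ none) →
      (∀ u g' e', G.move g u g' → upd e u = some e' → G.Win g' e') →
      G.Win g e

/-! ### Labeled transition systems with silent steps -/

section LTS

variable {Proc Act : Type}

/-- Weak internal steps `↠`: reflexive-transitive closure of `τ`-steps. -/
def Star (Tr : Proc → Act → Proc → Prop) (τ : Act) : Proc → Proc → Prop :=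
  Relation.ReflTransGen fun p p' => Tr p τ p'

/-- A process is stable if it has no `τ`-step. -/
def Stable (Tr : Proc → Act → Proc → Prop) (τ : Act) (p : Proc) : Prop :=
  ∀ p', ¬ Tr p τ p'

/-- Optional step `p →(α) p'`: a real `α`-step, or `α = τ` and `p = p'`. -/
def OptStep (Tr : Proc → Act → Proc → Prop) (τ : Act) (p : Proc) (α : Act) (p' : Proc) : Prop :=
  Tr p α p' ∨ (α = τ ∧ p = p')

/-- Lift of `→a` to sets. -/
def SetStep (Tr : Proc → Act → Proc → Prop) (Q : Set Proc) (a : Act) (Q' : Set Proc) : Prop :=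
  Q' = {q' | ∃ q ∈ Q, Tr q a q'}

/-- Lift of `↠` to sets. -/
def SetStar (Tr : Proc → Act → Proc → Prop) (τ : Act) (Q Q' : Set Proc) : Prop :=
  Q' = {q' | ∃ q ∈ Q, Star Tr τ q q'}

/-- Lift of `→(α)` to sets. -/
def SetOpt (Tr : Proc → Act → Proc → Prop) (τ : Act) (Q : Set Proc) (α : Act)
    (Q' : Set Proc) : Prop :=
  Q' = {q' | ∃ q ∈ Q, OptStep Tr τ q α q'}

end LTS

/-! ### The logic HML_srbb -/

mutual
/-- Formulas `φ` of HML_srbb: `⟨ε⟩χ` or immediate conjunctions `⋀Ψ`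
(conjunctions are indexed by an arbitrary type). `⊤` is the empty conjunction. -/
inductive Formula (Act : Type) (τ : Act) : Type 1
  | delayed : DFormula Act τ → Formula Act τ
  | conj : (I : Type) → (I → Conjunct Act τ) → Formula Act τ

/-- Delayed formulas `χ`: observations `⟨a⟩φ` (with `a ≠ τ`), standard
conjunctions `⋀Ψ`, stable conjunctions `⋀({¬⟨τ⟩⊤} ∪ Ψ)`, and branching
conjunctions `⋀({(α)φ} ∪ Ψ)`. -/
inductive DFormula (Act : Type) (τ : Act) : Type 1
  | obs : (a : Act) → a ≠ τ → Formula Act τ → DFormula Act τ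
  | conj : (I : Type) → (I → Conjunct Act τ) → DFormula Act τ
  | stableConj : (I : Type) → (I → Conjunct Act τ) → DFormula Act τ
  | branchConj : (α : Act) → Formula Act τ → (I : Type) → (I → Conjunct Act τ) → DFormula Act τ

/-- Conjuncts `ψ`: positive `⟨ε⟩χ` or negative `¬⟨ε⟩χ`. -/
inductive Conjunct (Act : Type) (τ : Act) : Type 1
  | pos : DFormula Act τ → Conjunct Act τ
  | neg : DFormula Act τ → Conjunct Act τ
end

section Semantics

variable {Proc Act : Type}

mutual
/-- Semantics `⟦φ⟧`. -/
def Sat (Tr : Proc → Act → Proc → Prop) (τ : Act) (p : Proc) : Formula Act τ → Prop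
  | .delayed χ => ∃ p', Star Tr τ p p' ∧ SatD Tr τ p' χ
  | .conj _ ps => ∀ i, SatC Tr τ p (ps i)

/-- Semantics `⟦χ⟧^ε` of delayed formulas. -/
def SatD (Tr : Proc → Act → Proc → Prop) (τ : Act) (p : Proc) : DFormula Act τ → Prop
  | .obs a _ φ => ∃ p', Tr p a p' ∧ Sat Tr τ p' φ
  | .conj _ ps => ∀ i, SatC Tr τ p (ps i)
  | .stableConj _ ps => Stable Tr τ p ∧ ∀ i, SatC Tr τ p (ps i)
  | .branchConj α φ _ ps =>
      (∃ p', OptStep Tr τ p α p' ∧ Sat Tr τ p' φ) ∧ ∀ i, SatC Tr τ p (ps i)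

/-- Semantics `⟦ψ⟧^∧` of conjuncts. -/
def SatC (Tr : Proc → Act → Proc → Prop) (τ : Act) (p : Proc) : Conjunct Act τ → Prop
  | .pos χ => ∃ p', Star Tr τ p p' ∧ SatD Tr τ p' χ
  | .neg χ => ¬ ∃ p', Star Tr τ p p' ∧ SatD Tr τ p' χ
end

/-- `φ` distinguishes `p` from the set `Q`. -/
def Distinguishes (Tr : Proc → Act → Proc → Prop) (τ : Act) (φ : Formula Act τ)
    (p : Proc) (Q : Set Proc) : Prop :=
  Sat Tr τ p φ ∧ ∀ q ∈ Q, ¬ Sat Tr τ q φ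

/-- The delayed formula `χ` distinguishes `p` from the set `Q` w.r.t. `⟦·⟧^ε`. -/
def DistinguishesD (Tr : Proc → Act → Proc → Prop) (τ : Act) (χ : DFormula Act τ)
    (p : Proc) (Q : Set Proc) : Prop :=
  SatD Tr τ p χ ∧ ∀ q ∈ Q, ¬ SatD Tr τ q χ

/-- The conjunct `ψ` distinguishes `p` from `q` w.r.t. `⟦·⟧^∧`. -/
def DistinguishesC (Tr : Proc → Act → Proc → Prop) (τ : Act) (ψ : Conjunct Act τ)
    (p q : Proc) : Prop :=
  SatC Tr τ p ψ ∧ ¬ SatC Tr τ q ψ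

/-- Stability-respecting branching bisimulations: symmetric relations with the
branching-bisimulation transfer property and the stability-respecting
property. -/
def IsSRBBisim (Tr : Proc → Act → Proc → Prop) (τ : Act) (R : Proc → Proc → Prop) : Prop :=
  Symmetric R ∧
  (∀ p q, R p q → ∀ α p', Tr p α p' →
    (α = τ ∧ R p' q) ∨
      ∃ q' q'', Star Tr τ q q' ∧ Tr q' α q'' ∧ R p q' ∧ R p' q'') ∧
  (∀ p q, R p q → Stable Tr τ p →
    ∃ q', Star Tr τ q q' ∧ Stable Tr τ q' ∧ R p q')

end Semantics

/-! ### Expressiveness prices -/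

section Expr

variable {Act : Type} {τ : Act}

mutual
/-- Expressiveness price `expr` of formulas. -/
def exprF : Formula Act τ → Energy
  | .delayed χ => exprE χ
  | .conj I ps => ⨆ _ : Nonempty I, ((unitE 4 + unitE 2) + ⨆ i, exprC (ps i))

/-- Expressiveness price `expr^ε` of delayed formulas. -/
def exprE : DFormula Act τ → Energy
  | .obs _ _ φ => unitE 0 + exprF φ
  | .conj I ps => ⨆ _ : Nonempty I, (unitE 2 + ⨆ i, exprC (ps i))
  | .stableConj _ ps => unitE 3 + ⨆ i, exprC (ps i)
  | .branchConj _ φ _ ps =>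
      (unitE 1 + unitE 2) +
        (((unitE 0 + exprF φ) ⊔ onlyAt 5 (1 + exprF φ 0)) ⊔ ⨆ i, exprC (ps i))

/-- Expressiveness price `expr^∧` of conjuncts. -/
def exprC : Conjunct Act τ → Energy
  | .pos χ => exprE χ ⊔ onlyAt 5 (exprE χ 0)
  | .neg χ => (unitE 7 + exprE χ) ⊔ onlyAt 6 (exprE χ 0)
end

end Expr

/-! ### The weak spectroscopy energy game -/

/-- Positions of the weak spectroscopy game. -/
inductive GPos (Proc Act : Type) : Type
  | att (p : Proc) (Q : Set Proc)                                 -- `[p,Q]_a`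
  | attD (p : Proc) (Q : Set Proc)                                -- `[p,Q]^ε_a`
  | attC (p q : Proc)                                             -- `[p,q]^∧_a`
  | attB (p : Proc) (Q : Set Proc)                                -- `[p,Q]^η_a`
  | defC (p : Proc) (Q : Set Proc)                                -- `(p,Q)_d`
  | defS (p : Proc) (Q : Set Proc)                                -- `(p,Q)^s_d`
  | defB (p : Proc) (α : Act) (p' : Proc) (Q Qa : Set Proc)       -- `(p,α,p',Q,Qa)^η_d`

/-- The zero update. -/
def zeroU : Update := fun _ => UpdComp.zero

/-- The update `-ê_i`. -/
def decU (i : Fin 8) : Update := fun k => if k = i then UpdComp.decr else UpdComp.zero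

/-- The update `(min_{1,6},0,0,0,0,0,0,0)`. -/
def minU16 : Update := fun k => if k = 0 then UpdComp.minWith {5} else UpdComp.zero

/-- The update `(min_{1,7},0,0,0,0,0,0,-1)`. -/
def minU17dec8 : Update := fun k =>
  if k = 0 then UpdComp.minWith {6} else if k = 7 then UpdComp.decr else UpdComp.zero

/-- The update `(0,-1,-1,0,0,0,0,0)`. -/
def dec23 : Update := fun k => if k = 1 ∨ k = 2 then UpdComp.decr else UpdComp.zero

/-- The update `(min_{1,6},-1,-1,0,0,0,0,0)`. -/
def minU16dec23 : Update := fun k =>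
  if k = 0 then UpdComp.minWith {5}
  else if k = 1 ∨ k = 2 then UpdComp.decr else UpdComp.zero

section Game

variable {Proc Act : Type}

/-- Moves of the weak spectroscopy game. -/
inductive GMove (Tr : Proc → Act → Proc → Prop) (τ : Act) :
    GPos Proc Act → Update → GPos Proc Act → Prop
  | delay {p : Proc} {Q Q' : Set Proc} :
      SetStar Tr τ Q Q' →
      GMove Tr τ (.att p Q) zeroU (.attD p Q')
  | procrastination {p p' : Proc} {Q : Set Proc} :
      Tr p τ p' → p ≠ p' →
      GMove Tr τ (.attD p Q) zeroU (.attD p' Q)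
  | observation {p p' : Proc} {a : Act} {Q Q' : Set Proc} :
      Tr p a p' → a ≠ τ → SetStep Tr Q a Q' →
      GMove Tr τ (.attD p Q) (decU 0) (.att p' Q')
  | finishing {p : Proc} :
      GMove Tr τ (.att p ∅) zeroU (.defC p ∅)
  | immediateConj {p : Proc} {Q : Set Proc} :
      Q ≠ ∅ →
      GMove Tr τ (.att p Q) (decU 4) (.defC p Q)
  | lateConj {p : Proc} {Q : Set Proc} :
      GMove Tr τ (.attD p Q) zeroU (.defC p Q)
  | conjAnswer {p q : Proc} {Q : Set Proc} :
      q ∈ Q →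
      GMove Tr τ (.defC p Q) (decU 2) (.attC p q)
  | posConjunct {p q : Proc} {Q : Set Proc} :
      SetStar Tr τ {q} Q →
      GMove Tr τ (.attC p q) minU16 (.attD p Q)
  | negConjunct {p q : Proc} {Q : Set Proc} :
      SetStar Tr τ {p} Q → p ≠ q →
      GMove Tr τ (.attC p q) minU17dec8 (.attD q Q)
  | stableConj {p : Proc} {Q : Set Proc} :
      Stable Tr τ p →
      GMove Tr τ (.attD p Q) zeroU (.defS p {q ∈ Q | Stable Tr τ q})
  | conjStableAnswer {p q : Proc} {Q : Set Proc} :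
      q ∈ Q →
      GMove Tr τ (.defS p Q) (decU 3) (.attC p q)
  | stableFinishing {p : Proc} :
      GMove Tr τ (.defS p ∅) (decU 3) (.defC p ∅)
  | branchConj {p p' : Proc} {α : Act} {Q Qa : Set Proc} :
      OptStep Tr τ p α p' → Qa ⊆ Q →
      GMove Tr τ (.attD p Q) zeroU (.defB p α p' (Q \ Qa) Qa)
  | branchAnswer {p p' q : Proc} {α : Act} {Q Qa : Set Proc} :
      q ∈ Q →
      GMove Tr τ (.defB p α p' Q Qa) dec23 (.attC p q)
  | branchObservation {p p' : Proc} {α : Act} {Q Qa Q' : Set Proc} :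
      SetOpt Tr τ Qa α Q' →
      GMove Tr τ (.defB p α p' Q Qa) minU16dec23 (.attB p' Q')
  | branchAccounting {p : Proc} {Q : Set Proc} :
      GMove Tr τ (.attB p Q) (decU 0) (.att p Q)

/-- Defender positions of the weak spectroscopy game. -/
def isDefender : GPos Proc Act → Prop
  | .defC _ _ => True
  | .defS _ _ => True
  | .defB _ _ _ _ _ => True
  | _ => False

/-- The weak spectroscopy energy game `G△`. -/
def specGame (Tr : Proc → Act → Proc → Prop) (τ : Act) : EGame (GPos Proc Act) where
  defender := isDefender
  move := GMove Tr τ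

end Game

/-! ### Strategy formulas -/

section Strat

variable {Proc Act : Type}

mutual
/-- Attacker strategy formulas (formula sort). -/
inductive StratF (Tr : Proc → Act → Proc → Prop) (τ : Act) :
    GPos Proc Act → Energy → Formula Act τ → Prop
  | delay {p : Proc} {Q Q' : Set Proc} {u : Update} {e e' : Energy} {χ : DFormula Act τ} :
      GMove Tr τ (.att p Q) u (.attD p Q') →
      upd e u = some e' →
      (specGame Tr τ).Win (.attD p Q') e' →
      StratD Tr τ (.attD p Q') e' χ →
      StratF Tr τ (.att p Q) e (.delayed χ)
  | immediateConj {p : Proc} {Q : Set Proc} {u : Update} {e e' : Energy}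
      {I : Type} {ps : I → Conjunct Act τ} :
      GMove Tr τ (.att p Q) u (.defC p Q) →
      upd e u = some e' →
      (specGame Tr τ).Win (.defC p Q) e' →
      StratD Tr τ (.defC p Q) e' (.conj I ps) →
      StratF Tr τ (.att p Q) e (.conj I ps)

/-- Attacker strategy formulas (delayed-formula sort). -/
inductive StratD (Tr : Proc → Act → Proc → Prop) (τ : Act) :
    GPos Proc Act → Energy → DFormula Act τ → Prop
  | procrastination {p p' : Proc} {Q : Set Proc} {u : Update} {e e' : Energy}
      {χ : DFormula Act τ} :
      GMove Tr τ (.attD p Q) u (.attD p' Q) →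
      upd e u = some e' →
      (specGame Tr τ).Win (.attD p' Q) e' →
      StratD Tr τ (.attD p' Q) e' χ →
      StratD Tr τ (.attD p Q) e χ
  | observation {p p' : Proc} {a : Act} {Q Q' : Set Proc} {u : Update} {e e' : Energy}
      {φ : Formula Act τ} (ha : a ≠ τ) :
      GMove Tr τ (.attD p Q) u (.att p' Q') →
      Tr p a p' → SetStep Tr Q a Q' →
      upd e u = some e' →
      (specGame Tr τ).Win (.att p' Q') e' →
      StratF Tr τ (.att p' Q') e' φ →
      StratD Tr τ (.attD p Q) e (.obs a ha φ)
  | lateConj {p : Proc} {Q : Set Proc} {u : Update} {e e' : Energy} {χ : DFormula Act τ} :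
      GMove Tr τ (.attD p Q) u (.defC p Q) →
      upd e u = some e' →
      (specGame Tr τ).Win (.defC p Q) e' →
      StratD Tr τ (.defC p Q) e' χ →
      StratD Tr τ (.attD p Q) e χ
  | stable {p : Proc} {Q Q' : Set Proc} {u : Update} {e e' : Energy} {χ : DFormula Act τ} :
      GMove Tr τ (.attD p Q) u (.defS p Q') →
      upd e u = some e' →
      (specGame Tr τ).Win (.defS p Q') e' →
      StratD Tr τ (.defS p Q') e' χ →
      StratD Tr τ (.attD p Q) e χ
  | branch {p p' : Proc} {α : Act} {Q Q' Qa : Set Proc} {u : Update} {e e' : Energy}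
      {χ : DFormula Act τ} :
      GMove Tr τ (.attD p Q) u (.defB p α p' Q' Qa) →
      upd e u = some e' →
      (specGame Tr τ).Win (.defB p α p' Q' Qa) e' →
      StratD Tr τ (.defB p α p' Q' Qa) e' χ →
      StratD Tr τ (.attD p Q) e χ
  | conj {p : Proc} {Q : Set Proc} {e : Energy}
      (us : {q // q ∈ Q} → Update) (es : {q // q ∈ Q} → Energy)
      (ψs : {q // q ∈ Q} → Conjunct Act τ) :
      (∀ qq : {q // q ∈ Q}, GMove Tr τ (.defC p Q) (us qq) (.attC p qq.1)) →
      (∀ qq : {q // q ∈ Q}, upd e (us qq) = some (es qq)) →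
      (∀ qq : {q // q ∈ Q}, (specGame Tr τ).Win (.attC p qq.1) (es qq)) →
      (∀ qq : {q // q ∈ Q}, StratC Tr τ (.attC p qq.1) (es qq) (ψs qq)) →
      StratD Tr τ (.defC p Q) e (.conj {q // q ∈ Q} ψs)
  | stableConj {p : Proc} {Q : Set Proc} {e : Energy}
      (hne : Q.Nonempty)
      (us : {q // q ∈ Q} → Update) (es : {q // q ∈ Q} → Energy)
      (ψs : {q // q ∈ Q} → Conjunct Act τ) :
      (∀ qq : {q // q ∈ Q}, GMove Tr τ (.defS p Q) (us qq) (.attC p qq.1)) →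
      (∀ qq : {q // q ∈ Q}, upd e (us qq) = some (es qq)) →
      (∀ qq : {q // q ∈ Q}, (specGame Tr τ).Win (.attC p qq.1) (es qq)) →
      (∀ qq : {q // q ∈ Q}, StratC Tr τ (.attC p qq.1) (es qq) (ψs qq)) →
      StratD Tr τ (.defS p Q) e (.stableConj {q // q ∈ Q} ψs)
  | stableFinish {p : Proc} {u : Update} {e e' : Energy} :
      GMove Tr τ (.defS p ∅) u (.defC p ∅) →
      upd e u = some e' →
      (specGame Tr τ).Win (.defC p (∅ : Set Proc)) e' →
      StratD Tr τ (.defS p ∅) e (.stableConj Empty fun x => x.elim)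
  | branchConj {p p' : Proc} {α : Act} {Q Qa Q' : Set Proc} {ua ua' : Update}
      {e e1 ea : Energy} {φa : Formula Act τ}
      (us : {q // q ∈ Q} → Update) (es : {q // q ∈ Q} → Energy)
      (ψs : {q // q ∈ Q} → Conjunct Act τ) :
      GMove Tr τ (.defB p α p' Q Qa) ua (.attB p' Q') →
      GMove Tr τ (.attB p' Q') ua' (.att p' Q') →
      upd e ua = some e1 →
      upd e1 ua' = some ea →
      (specGame Tr τ).Win (.att p' Q') ea →
      StratF Tr τ (.att p' Q') ea φa →
      (∀ qq : {q // q ∈ Q}, GMove Tr τ (.defB p α p' Q Qa) (us qq) (.attC p qq.1)) →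
      (∀ qq : {q // q ∈ Q}, upd e (us qq) = some (es qq)) →
      (∀ qq : {q // q ∈ Q}, (specGame Tr τ).Win (.attC p qq.1) (es qq)) →
      (∀ qq : {q // q ∈ Q}, StratC Tr τ (.attC p qq.1) (es qq) (ψs qq)) →
      StratD Tr τ (.defB p α p' Q Qa) e (.branchConj α φa {q // q ∈ Q} ψs)

/-- Attacker strategy formulas (conjunct sort). -/
inductive StratC (Tr : Proc → Act → Proc → Prop) (τ : Act) :
    GPos Proc Act → Energy → Conjunct Act τ → Prop
  | pos {p q : Proc} {Q' : Set Proc} {u : Update} {e e' : Energy} {χ : DFormula Act τ} :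
      GMove Tr τ (.attC p q) u (.attD p Q') →
      upd e u = some e' →
      (specGame Tr τ).Win (.attD p Q') e' →
      StratD Tr τ (.attD p Q') e' χ →
      StratC Tr τ (.attC p q) e (.pos χ)
  | neg {p q : Proc} {P' : Set Proc} {u : Update} {e e' : Energy} {χ : DFormula Act τ} :
      GMove Tr τ (.attC p q) u (.attD q P') →
      upd e u = some e' →
      (specGame Tr τ).Win (.attD q P') e' →
      StratD Tr τ (.attD q P') e' χ →
      StratC Tr τ (.attC p q) e (.neg χ)
end

end Strat

/-! ### Auxiliary lemmas -/

section AuxUpd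

lemma upd_eq_some' {e : Energy} {u : Update}
    (h : ∀ k, u k = UpdComp.decr → e k ≠ 0) :
    upd e u = some (fun k =>
      match u k with
      | UpdComp.decr => e k - 1
      | UpdComp.zero => e k
      | UpdComp.minWith D => (insert k D).inf e) := if_pos h

lemma upd_mono {e f : Energy} (hef : e ≤ f) {u : Update} {e' : Energy}
    (he : upd e u = some e') : ∃ f', upd f u = some f' ∧ e' ≤ f' := by
  unfold upd at he
  split at he
  case isTrue h =>
    injection he with he
    refine ⟨_, upd_eq_some' (fun k hk h0 => ?_), ?_⟩
    · have := hef k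
      rw [h0] at this
      exact h k hk (le_antisymm this zero_le)
    · intro k
      rw [← he]
      cases hk : u k with
      | decr => simp only [hk]; exact tsub_le_tsub_right (hef k) 1
      | zero => simpa only [hk] using hef k
      | minWith D => simp only [hk]; exact Finset.inf_mono_fun fun b _ => hef b
  case isFalse => cases he

lemma win_mono {Pos : Type} {G : EGame Pos} {g : Pos} {e : Energy}
    (W : G.Win g e) : ∀ {f : Energy}, e ≤ f → G.Win g f := by
  induction W with
  | attack hd hm hu _ ih =>
    intro f hef
    obtain ⟨f', hf', hle⟩ := upd_mono hef hu
    exact .attack hd hm hf' (ih hle)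
  | defend hd hne hwin ih =>
    intro f hef
    refine .defend hd ?_ ?_
    · intro u g' hm
      obtain ⟨e', he'⟩ := Option.ne_none_iff_exists'.mp (hne u g' hm)
      obtain ⟨f', hf', _⟩ := upd_mono hef he'
      simp [hf']
    · intro u g' f' hm hf'
      obtain ⟨e', he'⟩ := Option.ne_none_iff_exists'.mp (hne u g' hm)
      obtain ⟨f'', hf'', hle⟩ := upd_mono hef he'
      rw [hf'] at hf''
      injection hf'' with hf''
      exact hf'' ▸ ih u g' e' hm he' hle

/-- The energy `e` with component `i` decremented. -/
def decAt (e : Energy) (i : Fin 8) : Energy := fun k => if k = i then e k - 1 else e k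

lemma upd_zeroU (e : Energy) : upd e zeroU = some e := by
  have h : ∀ k, zeroU k = UpdComp.decr → e k ≠ 0 := by
    intro k hk; simp [zeroU] at hk
  rw [upd_eq_some' h]
  rfl

lemma upd_decU {e : Energy} {i : Fin 8} (hi : e i ≠ 0) :
    upd e (decU i) = some (decAt e i) := by
  have h : ∀ k, decU i k = UpdComp.decr → e k ≠ 0 := by
    intro k hk
    by_cases hki : k = i
    · exact hki ▸ hi
    · simp [decU, hki] at hk
  rw [upd_eq_some' h]
  congr 1
  funext k
  by_cases hki : k = i <;> simp [decAt, decU, hki]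

lemma upd_minU16 (e : Energy) :
    upd e minU16 = some (fun k => if k = 0 then e 0 ⊓ e 5 else e k) := by
  have h : ∀ k, minU16 k = UpdComp.decr → e k ≠ 0 := by
    intro k hk; by_cases hk0 : k = 0 <;> simp [minU16, hk0] at hk
  rw [upd_eq_some' h]
  congr 1
  funext k
  by_cases hk0 : k = 0 <;> simp [minU16, hk0]

lemma upd_minU17dec8 {e : Energy} (h7 : e 7 ≠ 0) :
    upd e minU17dec8 = some (fun k =>
      if k = 0 then e 0 ⊓ e 6 else if k = 7 then e 7 - 1 else e k) := by
  have h : ∀ k, minU17dec8 k = UpdComp.decr → e k ≠ 0 := by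
    intro k hk
    by_cases hk0 : k = 0
    · simp [minU17dec8, hk0] at hk
    · by_cases hk7 : k = 7
      · exact hk7 ▸ h7
      · simp [minU17dec8, hk0, hk7] at hk
  rw [upd_eq_some' h]
  congr 1
  funext k
  by_cases hk0 : k = 0
  · simp [minU17dec8, hk0]
  · by_cases hk7 : k = 7 <;> simp [minU17dec8, hk0, hk7]

lemma upd_dec23 {e : Energy} (h1 : e 1 ≠ 0) (h2 : e 2 ≠ 0) :
    upd e dec23 = some (fun k =>
      if k = 1 then e 1 - 1 else if k = 2 then e 2 - 1 else e k) := by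
  have h : ∀ k, dec23 k = UpdComp.decr → e k ≠ 0 := by
    intro k hk
    by_cases hk1 : k = 1
    · exact hk1 ▸ h1
    · by_cases hk2 : k = 2
      · exact hk2 ▸ h2
      · simp [dec23, hk1, hk2] at hk
  rw [upd_eq_some' h]
  congr 1
  funext k
  by_cases hk1 : k = 1
  · simp [dec23, hk1]
  · by_cases hk2 : k = 2 <;> simp [dec23, hk1, hk2]

lemma upd_minU16dec23 {e : Energy} (h1 : e 1 ≠ 0) (h2 : e 2 ≠ 0) :
    upd e minU16dec23 = some (fun k =>
      if k = 0 then e 0 ⊓ e 5 else if k = 1 then e 1 - 1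
      else if k = 2 then e 2 - 1 else e k) := by
  have h : ∀ k, minU16dec23 k = UpdComp.decr → e k ≠ 0 := by
    intro k hk
    by_cases hk0 : k = 0
    · simp [minU16dec23, hk0] at hk
    · by_cases hk1 : k = 1
      · exact hk1 ▸ h1
      · by_cases hk2 : k = 2
        · exact hk2 ▸ h2
        · simp [minU16dec23, hk0, hk1, hk2] at hk
  rw [upd_eq_some' h]
  congr 1
  funext k
  by_cases hk0 : k = 0
  · simp [minU16dec23, hk0]
  · by_cases hk1 : k = 1
    · simp [minU16dec23, hk0, hk1]
    · by_cases hk2 : k = 2 <;> simp [minU16dec23, hk0, hk1, hk2]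

end AuxUpd
section AuxGame

variable {Proc Act : Type} {Tr : Proc → Act → Proc → Prop} {τ : Act}

lemma enat_le_sub_one {a b : ℕ∞} (h : 1 + b ≤ a) : b ≤ a - 1 :=
  (ENat.addLECancellable_of_ne_top (by simp)).le_tsub_of_add_le_left h

lemma enat_ne_zero_of_one_add {a b : ℕ∞} (h : 1 + b ≤ a) : a ≠ 0 :=
  fun h0 => by simp [h0, add_eq_zero] at h

lemma decAt_le {t e : Energy} {i : Fin 8} (h : ∀ k, k ≠ i → t k ≤ e k)
    (hi : 1 + t i ≤ e i) : t ≤ decAt e i := by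
  intro k
  by_cases hk : k = i
  · subst hk
    simpa [decAt] using enat_le_sub_one hi
  · simpa [decAt, hk] using h k hk

lemma win_attD_of_star {p p0 : Proc} {Q : Set Proc} {e : Energy}
    (h : Star Tr τ p p0) (W : (specGame Tr τ).Win (.attD p0 Q) e) :
    (specGame Tr τ).Win (.attD p Q) e := by
  induction h using Relation.ReflTransGen.head_induction_on with
  | refl => exact W
  | head hstep _ ih =>
    rename_i a c _
    by_cases hac : a = c
    · exact hac ▸ ih
    · exact .attack (fun h => h) (GMove.procrastination hstep hac) (upd_zeroU _) ih

lemma win_defC_empty {p : Proc} {e : Energy} :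
    (specGame Tr τ).Win (.defC p (∅ : Set Proc)) e := by
  refine .defend trivial ?_ ?_
  · intro u g' hm
    cases hm with
    | conjAnswer hq => exact absurd hq (Set.notMem_empty _)
  · intro u g' e' hm _
    cases hm with
    | conjAnswer hq => exact absurd hq (Set.notMem_empty _)

lemma win_defC {p : Proc} {Q : Set Proc} {e : Energy}
    (h : ∀ q ∈ Q, e 2 ≠ 0 ∧ (specGame Tr τ).Win (.attC p q) (decAt e 2)) :
    (specGame Tr τ).Win (.defC p Q) e := by
  refine .defend trivial ?_ ?_
  · intro u g' hm
    cases hm with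
    | conjAnswer hq => rw [upd_decU (h _ hq).1]; simp
  · intro u g' e' hm hupd
    cases hm with
    | conjAnswer hq =>
      rw [upd_decU (h _ hq).1] at hupd
      injection hupd with hupd
      exact hupd ▸ (h _ hq).2

lemma win_defS {p : Proc} {Q : Set Proc} {e : Energy} (h3 : e 3 ≠ 0)
    (h : ∀ q ∈ Q, (specGame Tr τ).Win (.attC p q) (decAt e 3)) :
    (specGame Tr τ).Win (.defS p Q) e := by
  refine .defend trivial ?_ ?_
  · intro u g' hm
    cases hm with
    | conjStableAnswer hq => rw [upd_decU h3]; simp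
    | stableFinishing => rw [upd_decU h3]; simp
  · intro u g' e' hm hupd
    cases hm with
    | conjStableAnswer hq =>
      rw [upd_decU h3] at hupd
      injection hupd with hupd
      exact hupd ▸ h _ hq
    | stableFinishing =>
      exact win_defC_empty

end AuxGame
section Main

variable {Proc Act : Type} {Tr : Proc → Act → Proc → Prop} {τ : Act}

mutual

theorem winF : ∀ (φ : Formula Act τ) (p : Proc) (Q : Set Proc),
    Sat Tr τ p φ → (∀ q ∈ Q, ¬ Sat Tr τ q φ) →
    (specGame Tr τ).Win (.att p Q) (exprF φ)
  | .delayed χ, p, Q, hp, hQ => by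
    simp only [Sat] at hp hQ
    obtain ⟨p0, hstar, hp0⟩ := hp
    have hfail : ∀ q' ∈ {q' | ∃ q ∈ Q, Star Tr τ q q'}, ¬ SatD Tr τ q' χ := by
      rintro q' ⟨q, hqQ, hqs⟩ hsat
      exact hQ q hqQ ⟨q', hqs, hsat⟩
    have W := win_attD_of_star hstar
      (winD χ p0 {q' | ∃ q ∈ Q, Star Tr τ q q'} hp0 hfail)
    simp only [exprF]
    exact .attack (fun h => h) (GMove.delay rfl) (upd_zeroU _) W
  | .conj I ps, p, Q, hp, hQ => by
    simp only [Sat] at hp hQ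
    by_cases hQe : Q = ∅
    · subst hQe
      exact .attack (fun h => h) GMove.finishing (upd_zeroU _) win_defC_empty
    · obtain ⟨q0, hq0⟩ := Set.nonempty_iff_ne_empty.mpr hQe
      obtain ⟨i0, _⟩ := not_forall.mp (hQ q0 hq0)
      have hI : Nonempty I := ⟨i0⟩
      have hle : ∀ (i : I) (k : Fin 8),
          exprC (ps i) k ≤ (⨆ j, exprC (ps j)) k :=
        fun i k => le_iSup (fun j => exprC (ps j)) i k
      simp only [exprF, iSup_pos hI]
      have h4 : ((unitE 4 + unitE 2) + ⨆ j, exprC (ps j)) 4 ≠ 0 := by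
        apply enat_ne_zero_of_one_add (b := (⨆ j, exprC (ps j)) 4)
        simp [unitE]
      refine .attack (fun h => h) (GMove.immediateConj hQe) (upd_decU h4)
        (win_defC ?_)
      intro q hq
      obtain ⟨i, hi⟩ := not_forall.mp (hQ q hq)
      constructor
      · apply enat_ne_zero_of_one_add (b := (⨆ j, exprC (ps j)) 2)
        simp [decAt, unitE]
      · refine win_mono (winC (ps i) p q (hp i) hi) ?_
        refine decAt_le (fun k hk => ?_) ?_
        · refine (hle i k).trans ?_
          by_cases hk4 : k = 4
          · subst hk4
            simp only [decAt, if_pos rfl]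
            apply enat_le_sub_one
            simp [unitE]
          · simp only [decAt, if_neg hk4, Pi.add_apply]
            exact le_add_self
        · simp only [decAt, if_neg (by decide : (2 : Fin 8) ≠ 4), Pi.add_apply]
          calc 1 + exprC (ps i) 2 ≤ 1 + (⨆ j, exprC (ps j)) 2 :=
                add_le_add_right (hle i 2) 1
            _ ≤ _ := by simp [unitE]

theorem winD : ∀ (χ : DFormula Act τ) (p : Proc) (Q : Set Proc),
    SatD Tr τ p χ → (∀ q ∈ Q, ¬ SatD Tr τ q χ) →
    (specGame Tr τ).Win (.attD p Q) (exprE χ)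
  | .obs a ha φ, p, Q, hp, hQ => by
    simp only [SatD] at hp hQ
    obtain ⟨p', hstep, hp'⟩ := hp
    have hfail : ∀ q' ∈ {q' | ∃ q ∈ Q, Tr q a q'}, ¬ Sat Tr τ q' φ := by
      rintro q' ⟨q, hqQ, hstepq⟩ hsat
      exact hQ q hqQ ⟨q', hstepq, hsat⟩
    have W := winF φ p' {q' | ∃ q ∈ Q, Tr q a q'} hp' hfail
    simp only [exprE]
    have h0 : (unitE 0 + exprF φ) 0 ≠ 0 :=
      enat_ne_zero_of_one_add (b := exprF φ 0) (by simp [unitE])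
    refine .attack (fun h => h) (GMove.observation hstep ha rfl) (upd_decU h0)
      (win_mono W ?_)
    refine decAt_le (fun k hk => ?_) (by simp [unitE])
    simp [unitE, hk]
  | .conj I ps, p, Q, hp, hQ => by
    simp only [SatD] at hp hQ
    refine .attack (fun h => h) GMove.lateConj (upd_zeroU _) (win_defC ?_)
    intro q hq
    obtain ⟨i, hi⟩ := not_forall.mp (hQ q hq)
    have hI : Nonempty I := ⟨i⟩
    have hle : ∀ k, exprC (ps i) k ≤ (⨆ j, exprC (ps j)) k :=
      fun k => le_iSup (fun j => exprC (ps j)) i k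
    have hE : exprE (.conj I ps : DFormula Act τ)
        = unitE 2 + ⨆ j, exprC (ps j) := by
      simp only [exprE, iSup_pos hI]
    rw [hE]
    constructor
    · exact enat_ne_zero_of_one_add (b := (⨆ j, exprC (ps j)) 2) (by simp [unitE])
    · refine win_mono (winC (ps i) p q (hp i) hi) ?_
      refine decAt_le (fun k hk => ?_) ?_
      · refine (hle k).trans ?_
        simp only [Pi.add_apply]
        exact le_add_self
      · calc 1 + exprC (ps i) 2 ≤ 1 + (⨆ j, exprC (ps j)) 2 :=
              add_le_add_right (hle 2) 1
          _ ≤ _ := by simp [unitE]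
  | .stableConj I ps, p, Q, hp, hQ => by
    simp only [SatD] at hp hQ
    obtain ⟨hpstable, hp⟩ := hp
    refine .attack (fun h => h) (GMove.stableConj hpstable) (upd_zeroU _) ?_
    simp only [exprE]
    refine win_defS
      (enat_ne_zero_of_one_add (b := (⨆ j, exprC (ps j)) 3) (by simp [unitE])) ?_
    rintro q ⟨hqQ, hqstable⟩
    obtain ⟨i, hi⟩ := not_forall.mp (fun hall => hQ q hqQ ⟨hqstable, hall⟩)
    have hle : ∀ k, exprC (ps i) k ≤ (⨆ j, exprC (ps j)) k :=
      fun k => le_iSup (fun j => exprC (ps j)) i k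
    refine win_mono (winC (ps i) p q (hp i) hi) ?_
    refine decAt_le (fun k hk => ?_) ?_
    · refine (hle k).trans ?_
      simp only [Pi.add_apply]
      exact le_add_self
    · calc 1 + exprC (ps i) 3 ≤ 1 + (⨆ j, exprC (ps j)) 3 :=
            add_le_add_right (hle 3) 1
        _ ≤ _ := by simp [unitE]
  | .branchConj α φ I ps, p, Q, hp, hQ => by
    simp only [SatD] at hp hQ
    obtain ⟨⟨p', hopt, hp'⟩, hconj⟩ := hp
    set S := ⨆ j, exprC (ps j) with hS
    set A := ((unitE 0 + exprF φ) ⊔ onlyAt 5 (1 + exprF φ 0)) ⊔ S with hA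
    have hXA : unitE 0 + exprF φ ≤ A := le_sup_left.trans le_sup_left
    have hYA : onlyAt 5 (1 + exprF φ 0) ≤ A := le_sup_right.trans le_sup_left
    have hSA : S ≤ A := le_sup_right
    have hE : exprE (.branchConj α φ I ps : DFormula Act τ)
        = (unitE 1 + unitE 2) + A := by simp only [exprE, hA, hS]
    set Qa := {q ∈ Q | ∀ q', OptStep Tr τ q α q' → ¬ Sat Tr τ q' φ} with hQa
    have hQaQ : Qa ⊆ Q := fun q hq => hq.1
    rw [hE]
    set e := (unitE 1 + unitE 2) + A with he
    have he1 : 1 + A 1 ≤ e 1 := by simp [he, unitE]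
    have he2 : 1 + A 2 ≤ e 2 := by simp [he, unitE]
    have h1 : e 1 ≠ 0 := enat_ne_zero_of_one_add he1
    have h2 : e 2 ≠ 0 := enat_ne_zero_of_one_add he2
    have heA : ∀ k, A k ≤ e k := by
      intro k
      simp only [he, Pi.add_apply]
      exact le_add_self
    refine .attack (fun h => h) (GMove.branchConj hopt hQaQ) (upd_zeroU _) ?_
    refine .defend trivial ?_ ?_
    · intro u g' hm
      cases hm with
      | branchAnswer hq => rw [upd_dec23 h1 h2]; simp
      | branchObservation hQ'' => rw [upd_minU16dec23 h1 h2]; simp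
    · intro u g' e' hm hupd
      cases hm with
      | @branchAnswer _ _ q _ _ _ hq =>
        rw [upd_dec23 h1 h2] at hupd
        injection hupd with hupd
        subst hupd
        obtain ⟨hqQ, hqNa⟩ := hq
        have hex : ∃ q', OptStep Tr τ q α q' ∧ Sat Tr τ q' φ := by
          by_contra hno
          push_neg at hno
          exact hqNa ⟨hqQ, fun q' h h' => hno q' h h'⟩
        obtain ⟨i, hi⟩ := not_forall.mp (fun hall => hQ q hqQ ⟨hex, hall⟩)
        have hle : ∀ k, exprC (ps i) k ≤ S k :=
          fun k => le_iSup (fun j => exprC (ps j)) i k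
        refine win_mono (winC (ps i) p q (hconj i) hi) ?_
        intro k
        by_cases hk1 : k = 1
        · subst hk1
          simp only [if_pos rfl]
          exact enat_le_sub_one
            (le_trans (add_le_add_right ((hle 1).trans (hSA 1)) 1) he1)
        · by_cases hk2 : k = 2
          · subst hk2
            simp only [if_neg hk1, if_pos rfl]
            exact enat_le_sub_one
              (le_trans (add_le_add_right ((hle 2).trans (hSA 2)) 1) he2)
          · simp only [if_neg hk1, if_neg hk2]
            exact (hle k).trans ((hSA k).trans (heA k))
      | @branchObservation _ _ _ _ _ Q'' hQ'' =>
        rw [upd_minU16dec23 h1 h2] at hupd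
        injection hupd with hupd
        subst hupd
        have hfail : ∀ q'' ∈ Q'', ¬ Sat Tr τ q'' φ := by
          intro q'' hq''
          have hmem : q'' ∈ {q' | ∃ qa ∈ Qa, OptStep Tr τ qa α q'} := hQ'' ▸ hq''
          obtain ⟨qa, hqa, hstep⟩ := hmem
          exact hqa.2 q'' hstep
        have he0 : 1 + exprF φ 0 ≤ e 0 := by
          have := (hXA 0).trans (heA 0)
          simpa [unitE] using this
        have he5 : 1 + exprF φ 0 ≤ e 5 := by
          have := (hYA 5).trans (heA 5)
          simpa [onlyAt] using this
        have hmin : 1 + exprF φ 0 ≤ e 0 ⊓ e 5 := le_inf he0 he5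
        refine .attack (fun h => h) GMove.branchAccounting
          (upd_decU (by simpa using enat_ne_zero_of_one_add hmin))
          (win_mono (winF φ p' Q'' hp' hfail) ?_)
        refine decAt_le (fun k hk => ?_) (by simpa using hmin)
        by_cases hk1 : k = 1
        · subst hk1
          simp only [if_neg (by decide : (1 : Fin 8) ≠ 0), if_pos rfl]
          refine enat_le_sub_one (le_trans (add_le_add_right ?_ 1) he1)
          simpa [unitE] using hXA 1
        · by_cases hk2 : k = 2
          · subst hk2
            simp only [if_neg (by decide : (2 : Fin 8) ≠ 0), if_neg hk1, if_pos rfl]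
            refine enat_le_sub_one (le_trans (add_le_add_right ?_ 1) he2)
            simpa [unitE] using hXA 2
          · simp only [if_neg hk, if_neg hk1, if_neg hk2]
            refine le_trans ?_ (heA k)
            have := hXA k
            simpa [unitE, hk] using this

theorem winC : ∀ (ψ : Conjunct Act τ) (p q : Proc),
    SatC Tr τ p ψ → ¬ SatC Tr τ q ψ →
    (specGame Tr τ).Win (.attC p q) (exprC ψ)
  | .pos χ, p, q, hp, hq => by
    simp only [SatC] at hp hq
    obtain ⟨p0, hstar, hp0⟩ := hp
    have hfail : ∀ q' ∈ {q' | ∃ x ∈ ({q} : Set Proc), Star Tr τ x q'},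
        ¬ SatD Tr τ q' χ := by
      rintro q' ⟨x, hx, hst⟩ hsat
      rw [Set.mem_singleton_iff] at hx
      subst hx
      exact hq ⟨q', hst, hsat⟩
    have W := win_attD_of_star hstar
      (winD χ p0 {q' | ∃ x ∈ ({q} : Set Proc), Star Tr τ x q'} hp0 hfail)
    simp only [exprC]
    refine .attack (fun h => h) (GMove.posConjunct rfl) (upd_minU16 _)
      (win_mono W ?_)
    intro k
    by_cases hk : k = 0
    · subst hk
      simp only [if_pos rfl]
      refine le_inf ?_ ?_
      · exact le_sup_left (α := ℕ∞)
      · simp [onlyAt]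
    · simp only [if_neg hk]
      exact le_sup_left (a := exprE χ k)
  | .neg χ, p, q, hp, hq => by
    simp only [SatC] at hp hq
    rw [not_not] at hq
    obtain ⟨q0, hstar, hq0⟩ := hq
    have hne : p ≠ q := by
      rintro rfl
      exact hp ⟨q0, hstar, hq0⟩
    have hfail : ∀ q' ∈ {q' | ∃ x ∈ ({p} : Set Proc), Star Tr τ x q'},
        ¬ SatD Tr τ q' χ := by
      rintro q' ⟨x, hx, hst⟩ hsat
      rw [Set.mem_singleton_iff] at hx
      subst hx
      exact hp ⟨q', hst, hsat⟩
    have W := win_attD_of_star hstar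
      (winD χ q0 {q' | ∃ x ∈ ({p} : Set Proc), Star Tr τ x q'} hq0 hfail)
    simp only [exprC]
    have h7 : ((unitE 7 + exprE χ) ⊔ onlyAt 6 (exprE χ 0)) 7 ≠ 0 := by
      apply enat_ne_zero_of_one_add (b := exprE χ 7)
      refine le_trans ?_ (le_sup_left (α := ℕ∞))
      simp [unitE]
    refine .attack (fun h => h) (GMove.negConjunct rfl hne) (upd_minU17dec8 h7)
      (win_mono W ?_)
    intro k
    by_cases hk0 : k = 0
    · subst hk0
      simp only [if_pos rfl]
      refine le_inf ?_ ?_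
      · refine le_trans ?_ (le_sup_left (α := ℕ∞))
        simp [unitE]
      · refine le_trans ?_ (le_sup_right (α := ℕ∞))
        simp [onlyAt]
    · by_cases hk7 : k = 7
      · subst hk7
        simp only [if_neg hk0, if_pos rfl]
        apply enat_le_sub_one
        refine le_trans ?_ (le_sup_left (α := ℕ∞))
        simp [unitE]
      · simp only [if_neg hk0, if_neg hk7]
        refine le_trans ?_ (le_sup_left (α := ℕ∞))
        simp [unitE, hk0]

end

end Main

/-- if a stable conjunction `⋀({¬⟨τ⟩⊤} ∪ Ψ)` distinguishes `p`
from nonempty `Q` whose processes are all stable, then its `expr^ε` price is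
attacker-winning at `(p,Q)^s_d`. -/
theorem distinction_price_in_win_stable_conjunction {Proc Act : Type}
    (Tr : Proc → Act → Proc → Prop) (τ : Act)
    (I : Type) (ps : I → Conjunct Act τ) (p : Proc) (Q : Set Proc)
    (hQ : Q.Nonempty) (hstable : ∀ q ∈ Q, Stable Tr τ q)
    (h : DistinguishesD Tr τ (DFormula.stableConj I ps) p Q) :
    (specGame Tr τ).Win (.defS p Q) (exprE (DFormula.stableConj I ps)) := by
  obtain ⟨hsatp, hQfail⟩ := h
  simp only [SatD] at hsatp hQfail
  obtain ⟨-, hconj⟩ := hsatp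
  simp only [exprE]
  refine win_defS
    (enat_ne_zero_of_one_add (b := (⨆ j, exprC (ps j)) 3) (by simp [unitE])) ?_
  intro q hq
  obtain ⟨i, hi⟩ := not_forall.mp (fun hall => hQfail q hq ⟨hstable q hq, hall⟩)
  have hle : ∀ k, exprC (ps i) k ≤ (⨆ j, exprC (ps j)) k :=
    fun k => le_iSup (fun j => exprC (ps j)) i k
  refine win_mono (winC (ps i) p q (hconj i) hi) ?_
  refine decAt_le (fun k hk => ?_) ?_
  · refine (hle k).trans ?_
    simp only [Pi.add_apply]
    exact le_add_self
  · calc 1 + exprC (ps i) 3 ≤ 1 + (⨆ j, exprC (ps j)) 3 :=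
          add_le_add_right (hle 3) 1
      _ ≤ _ := by simp [unitE]

end Spectroscopy
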